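/- Let W : ℝ^N × ℝⁿ → ℝⁿ satisfy: there exist K, L ≥ 0 with |W(s,y)| ≤ K·|s| and |W(s,y) − W(s,y')| ≤ L·|s|·|y − y'| for all s, y, y'. Fix t ∈ ℝ^N, x ∈ ℝⁿ, and ε₀ ∈ [0,1]. Suppose ω₁, ω₂ : [0,1] → ℝⁿ are continuous with ω₁(0) = ω₂(0) = x, ω₁ is differentiable on (0,1] with ω₁'(ε) = (1/ε)·W(εt, ω₁(ε)), and ω₂ is differentiable on (0,1] with ω₂'(ε) = (1/ε)·W(ε(ε₀t), ω₂(ε)). Then ω₂(ε) = ω₁(ε₀·ε) for all ε ∈ [0,1]. -/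

import Mathlib

open Set

lemma uniq_aux {N n : ℕ}
    (W : EuclideanSpace ℝ (Fin N) → EuclideanSpace ℝ (Fin n) → EuclideanSpace ℝ (Fin n))
    (L : ℝ)
    (hLip : ∀ s y y', ‖W s y - W s y'‖ ≤ L * ‖s‖ * ‖y - y'‖)
    (s : EuclideanSpace ℝ (Fin N)) (ω₂ ω₃ : ℝ → EuclideanSpace ℝ (Fin n))
    (hc₂ : ContinuousOn ω₂ (Icc 0 1)) (hc₃ : ContinuousOn ω₃ (Icc 0 1))
    (h0 : ω₂ 0 = ω₃ 0)
    (hd₂ : ∀ ε ∈ Ioc (0:ℝ) 1,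
      HasDerivWithinAt ω₂ (ε⁻¹ • W (ε • s) (ω₂ ε)) (Icc 0 1) ε)
    (hd₃ : ∀ ε ∈ Ioc (0:ℝ) 1,
      HasDerivWithinAt ω₃ (ε⁻¹ • W (ε • s) (ω₃ ε)) (Icc 0 1) ε) :
    ∀ ε ∈ Icc (0:ℝ) 1, ω₂ ε = ω₃ ε := by
  set g : ℝ → EuclideanSpace ℝ (Fin n) := fun τ => ω₂ τ - ω₃ τ with hg
  set C : ℝ := L * ‖s‖ with hC
  have hgc : ContinuousOn g (Icc 0 1) := hc₂.sub hc₃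
  rintro ε ⟨hε0, hε1⟩
  rcases eq_or_lt_of_le hε0 with rfl | hεpos
  · exact h0
  -- key estimate for each δ ∈ (0, ε]
  have key : ∀ δ ∈ Ioc (0:ℝ) ε, ‖g ε‖ ≤ ‖g δ‖ * Real.exp (C * (ε - δ)) := by
    rintro δ ⟨hδ0, hδε⟩
    have hsub : Icc δ ε ⊆ Icc 0 1 := Icc_subset_Icc hδ0.le hε1
    have H := norm_le_gronwallBound_of_norm_deriv_right_le
      (f := g) (f' := fun τ => τ⁻¹ • (W (τ • s) (ω₂ τ) - W (τ • s) (ω₃ τ)))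
      (δ := ‖g δ‖) (K := C) (ε := 0) (a := δ) (b := ε)
      (hgc.mono hsub) ?_ le_rfl ?_ ε ⟨hδε, le_refl ε⟩
    · rwa [gronwallBound_ε0] at H
    · rintro τ ⟨hτδ, hτε⟩
      have hτ0 : (0:ℝ) < τ := hδ0.trans_le hτδ
      have hτmem : τ ∈ Ioc (0:ℝ) 1 := ⟨hτ0, (hτε.le.trans hε1)⟩
      have hnhds : Icc (0:ℝ) 1 ∈ nhds τ :=
        Icc_mem_nhds hτ0 (hτε.trans_le hε1)
      have h2 := (hd₂ τ hτmem).hasDerivAt hnhds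
      have h3 := (hd₃ τ hτmem).hasDerivAt hnhds
      have := (h2.sub h3).hasDerivWithinAt (s := Ici τ)
      simp only [smul_sub]
      exact this
    · rintro τ ⟨hτδ, hτε⟩
      have hτ0 : (0:ℝ) < τ := hδ0.trans_le hτδ
      have : ‖τ⁻¹ • (W (τ • s) (ω₂ τ) - W (τ • s) (ω₃ τ))‖
          = τ⁻¹ * ‖W (τ • s) (ω₂ τ) - W (τ • s) (ω₃ τ)‖ := by
        rw [norm_smul, Real.norm_eq_abs, abs_of_pos (inv_pos.mpr hτ0)]
      rw [this, add_zero]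
      have hb := hLip (τ • s) (ω₂ τ) (ω₃ τ)
      have hns : ‖τ • s‖ = τ * ‖s‖ := by
        rw [norm_smul, Real.norm_eq_abs, abs_of_pos hτ0]
      rw [hns] at hb
      calc τ⁻¹ * ‖W (τ • s) (ω₂ τ) - W (τ • s) (ω₃ τ)‖
          ≤ τ⁻¹ * (L * (τ * ‖s‖) * ‖ω₂ τ - ω₃ τ‖) := by
            exact mul_le_mul_of_nonneg_left hb (inv_pos.mpr hτ0).le
        _ = C * ‖g τ‖ := by
            field_simp [g, hC]; ring
  -- limit δ → 0⁺
  have hg0 : g 0 = 0 := sub_eq_zero.mpr h0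
  have hne : ε ∈ Icc (0:ℝ) 1 := ⟨hε0, hε1⟩
  have htend : Filter.Tendsto (fun δ => ‖g δ‖ * Real.exp (C * (ε - δ)))
      (nhdsWithin 0 (Ioc 0 ε)) (nhds 0) := by
    have h1 : Filter.Tendsto g (nhdsWithin 0 (Ioc 0 ε)) (nhds 0) := by
      have := (hgc 0 ⟨le_refl 0, zero_le_one⟩).tendsto
      rw [hg0] at this
      exact this.mono_left (nhdsWithin_mono _ (fun τ hτ => ⟨hτ.1.le, hτ.2.trans hε1⟩))
    have h2 : Filter.Tendsto (fun δ => Real.exp (C * (ε - δ)))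
        (nhdsWithin 0 (Ioc 0 ε)) (nhds (Real.exp (C * ε))) := by
      apply Filter.Tendsto.mono_left _ nhdsWithin_le_nhds
      have : Continuous (fun δ : ℝ => Real.exp (C * (ε - δ))) := by continuity
      simpa using this.tendsto 0
    have := (h1.norm.mul h2)
    simpa using this
  have hnebot : (nhdsWithin (0:ℝ) (Ioc 0 ε)).NeBot := by
    rw [nhdsWithin_Ioc_eq_nhdsGT hεpos]
    infer_instance
  have : ‖g ε‖ ≤ 0 :=
    ge_of_tendsto htend (Filter.eventually_mem_set.mpr self_mem_nhdsWithin |>.mono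
      (fun δ hδ => key δ hδ))
  have : g ε = 0 := norm_le_zero_iff.mp this
  exact sub_eq_zero.mp this

theorem stmt_4 (N n : ℕ)
    (W : EuclideanSpace ℝ (Fin N) → EuclideanSpace ℝ (Fin n) → EuclideanSpace ℝ (Fin n))
    (K L : ℝ) (hK : 0 ≤ K) (hL : 0 ≤ L)
    (hbound : ∀ s y, ‖W s y‖ ≤ K * ‖s‖)
    (hLip : ∀ s y y', ‖W s y - W s y'‖ ≤ L * ‖s‖ * ‖y - y'‖)
    (t : EuclideanSpace ℝ (Fin N)) (x : EuclideanSpace ℝ (Fin n))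
    (ε₀ : ℝ) (hε₀ : ε₀ ∈ Icc (0:ℝ) 1)
    (ω₁ ω₂ : ℝ → EuclideanSpace ℝ (Fin n))
    (hc₁ : ContinuousOn ω₁ (Icc 0 1)) (hc₂ : ContinuousOn ω₂ (Icc 0 1))
    (h10 : ω₁ 0 = x) (h20 : ω₂ 0 = x)
    (hd₁ : ∀ ε ∈ Ioc (0:ℝ) 1,
      HasDerivWithinAt ω₁ (ε⁻¹ • W (ε • t) (ω₁ ε)) (Icc 0 1) ε)
    (hd₂ : ∀ ε ∈ Ioc (0:ℝ) 1,
      HasDerivWithinAt ω₂ (ε⁻¹ • W (ε • (ε₀ • t)) (ω₂ ε)) (Icc 0 1) ε) :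
    ∀ ε ∈ Icc (0:ℝ) 1, ω₂ ε = ω₁ (ε₀ * ε) := by
  obtain ⟨hε₀0, hε₀1⟩ := hε₀
  set ω₃ : ℝ → EuclideanSpace ℝ (Fin n) := fun ε => ω₁ (ε₀ * ε) with hω₃
  have hmaps : MapsTo (fun ε : ℝ => ε₀ * ε) (Icc 0 1) (Icc 0 1) := by
    rintro u ⟨hu0, hu1⟩
    exact ⟨mul_nonneg hε₀0 hu0, mul_le_one₀ hε₀1 hu0 hu1⟩
  have hc₃ : ContinuousOn ω₃ (Icc 0 1) :=
    hc₁.comp ((continuous_const.mul continuous_id).continuousOn) hmaps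
  have h30 : ω₃ 0 = x := by simp [hω₃, h10]
  have hd₃ : ∀ ε ∈ Ioc (0:ℝ) 1,
      HasDerivWithinAt ω₃ (ε⁻¹ • W (ε • (ε₀ • t)) (ω₃ ε)) (Icc 0 1) ε := by
    rintro ε ⟨hεpos, hε1⟩
    rcases eq_or_lt_of_le hε₀0 with hz | hε₀pos
    · -- ε₀ = 0 : constant
      have hW0 : W (ε • (ε₀ • t)) (ω₃ ε) = 0 := by
        have := hbound (ε • (ε₀ • t)) (ω₃ ε)
        rw [← hz] at this
        simp only [zero_smul, smul_zero, norm_zero, mul_zero] at this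
        rw [← hz]
        simpa [norm_le_zero_iff] using this
      rw [hW0, smul_zero]
      have : ω₃ = fun _ => x := by funext u; simp [hω₃, ← hz, h10]
      rw [this]
      exact hasDerivWithinAt_const ε _ x
    · have hεε₀ : ε₀ * ε ∈ Ioc (0:ℝ) 1 :=
        ⟨mul_pos hε₀pos hεpos, mul_le_one₀ hε₀1 hεpos.le hε1⟩
      have hg := hd₁ (ε₀ * ε) hεε₀
      have hh : HasDerivWithinAt (fun ε : ℝ => ε₀ * ε) ε₀ (Icc 0 1) ε := by
        simpa using ((hasDerivAt_id ε).const_mul ε₀).hasDerivWithinAt (s := Icc 0 1)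
      have hcomp := hg.scomp ε hh hmaps
      have heq : ε₀ • ((ε₀ * ε)⁻¹ • W ((ε₀ * ε) • t) (ω₁ (ε₀ * ε)))
          = ε⁻¹ • W (ε • (ε₀ • t)) (ω₃ ε) := by
        rw [smul_smul, smul_smul]
        congr 2
        · field_simp
        · ring
      rw [heq] at hcomp
      exact hcomp
  exact uniq_aux W L hLip (ε₀ • t) ω₂ ω₃ hc₂ hc₃ (by rw [h20, h30]) hd₂ hd₃
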